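/- arXiv:1309.4280 — 5 statements merged into one kernel-verified Lean document; each statement's English description precedes it below -/
import Mathlib

section
/- Let L be a normed Riesz space and P = x ⊗ φ a positive rank-one idempotent on L, where x is a positive vector and φ a positive continuous functional with φ(x) = 1. Then P has no nontrivial closed invariant order ideal if and only if x is a quasi-interior point of L and φ is strictly positive. -/
open Filter Topology

section Defs
variable {L : Type*} [NormedAddCommGroup L] [Lattice L] [HasSolidNorm L] [IsOrderedAddMonoid L] [NormedSpace ℝ L]

def IsOrderIdeal (J : Submodule ℝ L) : Prop :=
  ∀ x y : L, |x| ≤ |y| → y ∈ J → x ∈ J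

def InvariantUnder (T : L →L[ℝ] L) (J : Submodule ℝ L) : Prop :=
  ∀ x ∈ J, T x ∈ J

def PositiveOp (T : L →L[ℝ] L) : Prop := ∀ x : L, 0 ≤ x → 0 ≤ T x

def IdealReducible (F : Set (L →L[ℝ] L)) : Prop :=
  ∃ J : Submodule ℝ L, IsOrderIdeal J ∧ IsClosed (J : Set L) ∧ J ≠ ⊥ ∧ J ≠ ⊤ ∧
    ∀ T ∈ F, InvariantUnder T J

def ClosedIdealChain (C : Set (Submodule ℝ L)) : Prop :=
  IsChain (· ≤ ·) C ∧ ∀ J ∈ C, IsOrderIdeal J ∧ IsClosed (J : Set L)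

def IdealTriangularizable (F : Set (L →L[ℝ] L)) : Prop :=
  ∃ C : Set (Submodule ℝ L), ClosedIdealChain C ∧
    (∀ C' : Set (Submodule ℝ L), ClosedIdealChain C' → C ⊆ C' → C' = C) ∧
    ∀ J ∈ C, ∀ T ∈ F, InvariantUnder T J

def QuasiInterior (x : L) : Prop :=
  0 ≤ x ∧ Dense {y : L | ∃ lam : ℝ, 0 ≤ lam ∧ |y| ≤ lam • x}

def StrictlyPosFunctional (φ : L →L[ℝ] ℝ) : Prop :=
  (∀ x : L, 0 ≤ x → 0 ≤ φ x) ∧ ∀ x : L, 0 ≤ x → x ≠ 0 → 0 < φ x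

def StrictlyPosOp (T : L →L[ℝ] L) : Prop :=
  PositiveOp T ∧ ∀ x : L, T |x| = 0 → x = 0

def AdjointStrictlyPos (T : L →L[ℝ] L) : Prop :=
  ∀ ψ : L →L[ℝ] ℝ, (∀ x : L, 0 ≤ x → 0 ≤ ψ x) → ψ.comp T = 0 → ψ = 0

def IsLatAtom (a : L) : Prop :=
  0 ≤ a ∧ a ≠ 0 ∧ ∀ x : L, 0 ≤ x → x ≤ a → ∃ lam : ℝ, 0 ≤ lam ∧ x = lam • a

def Quasinilpotent (T : L →L[ℝ] L) : Prop :=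
  Tendsto (fun n : ℕ => ‖T ^ n‖ ^ ((1:ℝ) / n)) atTop (𝓝 0)

def PowerCompact (T : L →L[ℝ] L) : Prop :=
  ∃ k : ℕ, 0 < k ∧ IsCompactOperator (T ^ k : L →L[ℝ] L)

def OpLE (S T : L →L[ℝ] L) : Prop := ∀ x : L, 0 ≤ x → S x ≤ T x

def IsBand (B : Submodule ℝ L) : Prop :=
  IsOrderIdeal B ∧ ∀ A : Set L, A.Nonempty → A ⊆ B → ∀ x : L, IsLUB A x → x ∈ B

def IsBandProjection (P : L →L[ℝ] L) (B : Submodule ℝ L) : Prop :=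
  PositiveOp P ∧ P.comp P = P ∧ (∀ x : L, P x ∈ B) ∧ (∀ x ∈ B, P x = x) ∧
    ∀ x : L, ∀ b ∈ B, |x - P x| ⊓ |b| = 0

def IsAtomicBand (B : Submodule ℝ L) : Prop :=
  IsBand B ∧ (∀ a : L, IsLatAtom a → a ∈ B) ∧
    ∀ B' : Submodule ℝ L, IsBand B' → (∀ a : L, IsLatAtom a → a ∈ B') → B ≤ B'

def DedekindComplete (L : Type*) [NormedAddCommGroup L] [Lattice L] [HasSolidNorm L] [IsOrderedAddMonoid L] : Prop :=
  ∀ A : Set L, A.Nonempty → BddAbove A → ∃ x : L, IsLUB A x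

def OrderContinuousNorm (L : Type*) [NormedAddCommGroup L] [Lattice L] [HasSolidNorm L] [IsOrderedAddMonoid L] : Prop :=
  ∀ A : Set L, A.Nonempty → DirectedOn (· ≥ ·) A → IsGLB A 0 →
    ∀ ε : ℝ, 0 < ε → ∃ a ∈ A, ‖a‖ < ε

def MaxAtomFamily (𝒜 : Set L) : Prop :=
  (∀ a ∈ 𝒜, IsLatAtom a ∧ ‖a‖ = 1) ∧
  (∀ a ∈ 𝒜, ∀ b ∈ 𝒜, a ≠ b → a ⊓ b = 0) ∧
  ∀ c : L, IsLatAtom c → ∃ a ∈ 𝒜, ¬ (c ⊓ a = 0)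

def AtomicDiagOf (𝒜 : Set L) (Pa : L → (L →L[ℝ] L)) (T D : L →L[ℝ] L) : Prop :=
  (∀ F : Finset L, ↑F ⊆ 𝒜 → OpLE (∑ a ∈ F, (Pa a).comp (T.comp (Pa a))) D) ∧
  ∀ U : L →L[ℝ] L,
    (∀ F : Finset L, ↑F ⊆ 𝒜 → OpLE (∑ a ∈ F, (Pa a).comp (T.comp (Pa a))) U) → OpLE D U

def SchepSet (T : L →L[ℝ] L) : Set (L →L[ℝ] L) :=
  {S | ∃ (m : ℕ) (P : Fin m → (L →L[ℝ] L)) (B : Fin m → Submodule ℝ L),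
    (∀ i, IsBand (B i) ∧ IsBandProjection (P i) (B i)) ∧ (∑ i, P i = 1) ∧
    S = ∑ i, (P i).comp (T.comp (P i))}

def CentralPartOf (T PT : L →L[ℝ] L) : Prop :=
  PositiveOp PT ∧ (∀ S ∈ SchepSet T, OpLE PT S) ∧
    ∀ U : L →L[ℝ] L, PositiveOp U → (∀ S ∈ SchepSet T, OpLE U S) → OpLE U PT

end Defs


section Aux
variable {L : Type*} [NormedAddCommGroup L] [Lattice L] [HasSolidNorm L] [IsOrderedAddMonoid L] [NormedSpace ℝ L]

private lemma abs_of_nonneg'' {a : L} (h : 0 ≤ a) : |a| = a :=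
  sup_eq_left.mpr ((neg_nonpos.mpr h).trans h)

private lemma neg_abs_le'' (a : L) : -|a| ≤ a := neg_le.mp (neg_le_abs a)

private lemma abs_ne_zero'' {a : L} (h : a ≠ 0) : |a| ≠ 0 := by
  intro h0
  apply h
  have h1 : a ≤ 0 := h0 ▸ le_abs_self a
  have h2 : -a ≤ 0 := h0 ▸ neg_le_abs a
  exact le_antisymm h1 (by simpa using h2)

private lemma inv_pow_two_smul_nonneg {z : L} (hz : 0 ≤ z) (j : ℕ) :
    0 ≤ ((2:ℝ)^j)⁻¹ • z := by
  induction j with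
  | zero => simpa using hz
  | succ j ih =>
    apply nsmul_two_semiclosed
    have h : (2:ℕ) • (((2:ℝ)^(j+1))⁻¹ • z) = ((2:ℝ)^j)⁻¹ • z := by
      rw [← Nat.cast_smul_eq_nsmul ℝ, ← mul_smul]
      norm_num [pow_succ]
      ring_nf
    rw [h]; exact ih

private lemma real_smul_nonneg {c : ℝ} {z : L} (hc : 0 ≤ c) (hz : 0 ≤ z) : 0 ≤ c • z := by
  have hdy : ∀ (n j : ℕ), 0 ≤ ((n : ℝ) / 2^j) • z := by
    intro n j
    have h1 : ((n:ℝ) / 2^j) • z = n • (((2:ℝ)^j)⁻¹ • z) := by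
      rw [← Nat.cast_smul_eq_nsmul ℝ, ← mul_smul]
      ring_nf
    rw [h1]; exact nsmul_nonneg (inv_pow_two_smul_nonneg hz j) n
  have h2pos : ∀ j : ℕ, (0:ℝ) < 2 ^ j := fun j => by positivity
  have hle : ∀ j : ℕ, ((⌊c * 2^j⌋₊ : ℝ) / 2^j) ≤ c := by
    intro j
    rw [div_le_iff₀ (h2pos j)]
    exact Nat.floor_le (by positivity)
  have hge : ∀ j : ℕ, c - (1/2)^j ≤ ((⌊c * 2^j⌋₊ : ℝ) / 2^j) := by
    intro j
    have hf : c * 2^j < (⌊c * 2^j⌋₊ : ℝ) + 1 := Nat.lt_floor_add_one _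
    have h2 : (0:ℝ) < 2^j := h2pos j
    have hstep : c ≤ ((⌊c * 2^j⌋₊ : ℝ) + 1) / 2^j := by
      rw [le_div_iff₀ h2]; linarith
    have hsplit : ((⌊c * 2^j⌋₊ : ℝ) + 1) / 2^j = (⌊c * 2^j⌋₊ : ℝ) / 2^j + (1/2)^j := by
      rw [add_div, div_pow, one_pow]
    rw [hsplit] at hstep
    linarith
  have hlim : Filter.Tendsto (fun j : ℕ => ((⌊c * 2^j⌋₊ : ℝ) / 2^j)) Filter.atTop (nhds c) := by
    have hhalf : Filter.Tendsto (fun j : ℕ => ((1:ℝ)/2)^j) Filter.atTop (nhds 0) :=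
      tendsto_pow_atTop_nhds_zero_of_lt_one (by norm_num) (by norm_num)
    have hlow : Filter.Tendsto (fun j : ℕ => c - ((1:ℝ)/2)^j) Filter.atTop (nhds c) := by
      simpa using tendsto_const_nhds.sub hhalf
    exact tendsto_of_tendsto_of_tendsto_of_le_of_le hlow tendsto_const_nhds hge hle
  have hcl : IsClosed {d : ℝ | 0 ≤ d • z} :=
    isClosed_le continuous_const (continuous_id.smul continuous_const)
  have hmem : c ∈ {d : ℝ | 0 ≤ d • z} :=
    hcl.mem_of_tendsto hlim (Filter.Eventually.of_forall fun j => hdy _ j)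
  exact hmem

private lemma real_smul_mono {c : ℝ} (hc : 0 ≤ c) {a b : L} (h : a ≤ b) : c • a ≤ c • b := by
  have := real_smul_nonneg hc (sub_nonneg.2 h)
  rw [smul_sub] at this
  exact sub_nonneg.1 this

private lemma abs_smul_le' (c : ℝ) (y : L) : |c • y| ≤ |c| • |y| := by
  have key : ∀ d : ℝ, ∀ w : L, d • w ≤ |d| • |w| := by
    intro d w
    rcases le_or_gt 0 d with hd | hd
    · rw [abs_of_nonneg hd]
      exact real_smul_mono hd (le_abs_self w)
    · have h : d • w = (-d) • (-w) := by rw [neg_smul_neg]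
      rw [h, abs_of_neg hd]
      exact real_smul_mono (by linarith) (neg_le_abs w)
  have h1 : c • y ≤ |c| • |y| := key c y
  have h2 : -(c • y) ≤ |c| • |y| := by
    have := key c (-y)
    rwa [smul_neg, abs_neg] at this
  show (c • y) ⊔ (-(c • y)) ≤ |c| • |y|
  exact sup_le h1 h2

private lemma closure_isOrderIdeal {I : Submodule ℝ L} (hI : IsOrderIdeal I) :
    IsOrderIdeal I.topologicalClosure := by
  intro a b hab hb
  have hb' : b ∈ closure (I : Set L) := by
    rwa [← Submodule.topologicalClosure_coe]
  obtain ⟨u, hu, hub⟩ := mem_closure_iff_seq_limit.mp hb'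
  set v : ℕ → L := fun n => (a ⊔ (-|u n|)) ⊓ |u n| with hv
  have hvI : ∀ n, v n ∈ I := by
    intro n
    refine hI (v n) (u n) ?_ (hu n)
    have hlow : -|u n| ≤ v n := le_inf le_sup_right ((neg_nonpos.mpr (abs_nonneg _)).trans (abs_nonneg _))
    have hup : v n ≤ |u n| := inf_le_right
    show (v n) ⊔ (-(v n)) ≤ |u n|
    exact sup_le hup (neg_le.mp hlow)
  have habs : Filter.Tendsto (fun n => |u n|) Filter.atTop (nhds (|b|)) := by
    have h : Filter.Tendsto (fun n => u n ⊔ -u n) Filter.atTop (nhds (b ⊔ -b)) :=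
      hub.sup_nhds hub.neg
    exact h
  have hvlim : Filter.Tendsto v Filter.atTop (nhds ((a ⊔ (-|b|)) ⊓ |b|)) :=
    (Filter.Tendsto.sup_nhds tendsto_const_nhds habs.neg).inf_nhds habs
  have heq : (a ⊔ (-|b|)) ⊓ |b| = a := by
    have h1 : -|b| ≤ a := (neg_le_neg hab).trans (neg_abs_le'' a)
    have h2 : a ≤ |b| := (le_abs_self a).trans hab
    rw [sup_eq_left.mpr h1, inf_eq_left.mpr h2]
  rw [heq] at hvlim
  have : a ∈ closure (I : Set L) := mem_closure_of_tendsto hvlim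
    (Filter.Eventually.of_forall hvI)
  rwa [← Submodule.topologicalClosure_coe] at this

private lemma continuous_abs' : Continuous (fun z : L => |z|) := by
  have : (fun z : L => |z|) = fun z => z ⊔ -z := by funext z; rfl
  rw [this]; exact continuous_id.sup continuous_neg

end Aux

theorem stmt2 {L : Type*} [NormedAddCommGroup L] [Lattice L] [HasSolidNorm L] [IsOrderedAddMonoid L] [NormedSpace ℝ L]
    (x : L) (φ : L →L[ℝ] ℝ) (hx : 0 ≤ x) (hφ : ∀ y : L, 0 ≤ y → 0 ≤ φ y)
    (hφx : φ x = 1) :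
    (¬ IdealReducible ({φ.smulRight x} : Set (L →L[ℝ] L))) ↔
      QuasiInterior x ∧ StrictlyPosFunctional φ := by
  have hφmono : ∀ a b : L, a ≤ b → φ a ≤ φ b := by
    intro a b h
    have := hφ (b - a) (sub_nonneg.2 h)
    rw [map_sub] at this; linarith
  constructor
  · intro hirr
    have hxne : x ≠ 0 := by
      intro h; rw [h, map_zero] at hφx; norm_num at hφx
    have hsp : StrictlyPosFunctional φ := by
      refine ⟨hφ, fun y hy hyne => ?_⟩
      rcases (hφ y hy).lt_or_eq with h | h
      · exact h
      · exfalso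
        set N : Submodule ℝ L :=
          { carrier := {z | φ |z| = 0}
            add_mem' := by
              intro a b ha hb
              simp only [Set.mem_setOf_eq] at *
              have h1 : φ |a + b| ≤ φ (|a| + |b|) := hφmono _ _ (abs_add_le a b)
              rw [map_add, ha, hb] at h1
              have h2 : 0 ≤ φ |a + b| := hφ _ (abs_nonneg _)
              linarith
            zero_mem' := by simp
            smul_mem' := by
              intro c z hz
              simp only [Set.mem_setOf_eq] at *
              have h1 : φ |c • z| ≤ φ (|c| • |z|) := hφmono _ _ (abs_smul_le' c z)
              rw [map_smul, smul_eq_mul, hz, mul_zero] at h1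
              have h2 : 0 ≤ φ |c • z| := hφ _ (abs_nonneg _)
              linarith } with hN
        have hmemN : ∀ z : L, z ∈ N ↔ φ |z| = 0 := fun z => Iff.rfl
        have hNideal : IsOrderIdeal N := by
          intro a b hab hbN
          rw [hmemN] at *
          have h1 : φ |a| ≤ φ |b| := hφmono _ _ hab
          have h2 : 0 ≤ φ |a| := hφ _ (abs_nonneg _)
          rw [hbN] at h1
          linarith
        have hNclosed : IsClosed (N : Set L) := by
          have heq : (N : Set L) = (fun z : L => φ |z|) ⁻¹' {0} := rfl
          rw [heq]
          exact IsClosed.preimage (φ.continuous.comp continuous_abs') isClosed_singleton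
        have hyN : y ∈ N := by rw [hmemN, abs_of_nonneg'' hy, ← h]
        apply hirr
        refine ⟨N, hNideal, hNclosed, ?_, ?_, ?_⟩
        · intro hb; rw [hb, Submodule.mem_bot] at hyN; exact hyne hyN
        · intro ht
          have hxN : x ∈ N := ht ▸ Submodule.mem_top
          rw [hmemN, abs_of_nonneg'' hx, hφx] at hxN; norm_num at hxN
        · intro S hS
          rw [Set.mem_singleton_iff] at hS; subst hS
          intro z hz
          have hz0 : φ z = 0 := by
            rw [hmemN] at hz
            have h1 : φ z ≤ φ |z| := hφmono _ _ (le_abs_self z)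
            have h2 : φ (-z) ≤ φ |z| := hφmono _ _ (neg_le_abs z)
            rw [map_neg] at h2
            linarith
          show φ.smulRight x z ∈ N
          rw [ContinuousLinearMap.smulRight_apply, hz0, zero_smul]
          exact N.zero_mem
    refine ⟨⟨hx, ?_⟩, hsp⟩
    set I : Submodule ℝ L :=
      { carrier := {y | ∃ lam : ℝ, 0 ≤ lam ∧ |y| ≤ lam • x}
        add_mem' := by
          rintro a b ⟨la, hla, ha⟩ ⟨lb, hlb, hb⟩
          refine ⟨la + lb, by linarith, (abs_add_le a b).trans ?_⟩
          rw [add_smul]; exact add_le_add ha hb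
        zero_mem' := ⟨0, le_rfl, by simp⟩
        smul_mem' := by
          rintro c z ⟨l, hl, hz⟩
          refine ⟨|c| * l, by positivity, ?_⟩
          calc |c • z| ≤ |c| • |z| := abs_smul_le' c z
          _ ≤ |c| • (l • x) := real_smul_mono (abs_nonneg c) hz
          _ = (|c| * l) • x := (mul_smul _ _ _).symm } with hI
    have hIideal : IsOrderIdeal I := by
      rintro a b hab ⟨l, hl, hb⟩
      exact ⟨l, hl, hab.trans hb⟩
    set J := I.topologicalClosure with hJ
    have hJeq : J = ⊤ := by
      by_contra hne
      apply hirr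
      refine ⟨J, closure_isOrderIdeal hIideal, I.isClosed_topologicalClosure, ?_, hne, ?_⟩
      · intro hb
        have hxI : x ∈ I := ⟨1, zero_le_one, by rw [one_smul, abs_of_nonneg'' hx]⟩
        have hxJ : x ∈ J := I.le_topologicalClosure hxI
        rw [hb, Submodule.mem_bot] at hxJ; exact hxne hxJ
      · intro S hS; rw [Set.mem_singleton_iff] at hS; subst hS
        intro z _
        apply I.le_topologicalClosure
        refine ⟨|φ z|, abs_nonneg _, ?_⟩
        show |φ.smulRight x z| ≤ _
        rw [ContinuousLinearMap.smulRight_apply]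
        calc |φ z • x| ≤ |φ z| • |x| := abs_smul_le' _ _
        _ = |φ z| • x := by rw [abs_of_nonneg'' hx]
    rw [dense_iff_closure_eq]
    show closure (I : Set L) = Set.univ
    rw [← Submodule.topologicalClosure_coe, show I.topologicalClosure = J from rfl, hJeq]
    rfl
  · rintro ⟨⟨hx0, hdense⟩, hpos, hstrict⟩ hred
    obtain ⟨J, hJideal, hJclosed, hJbot, hJtop, hJinv⟩ := hred
    obtain ⟨z, hzJ, hzne⟩ := Submodule.exists_mem_ne_zero_of_ne_bot hJbot
    have hzabs : |z| ∈ J := hJideal |z| z (abs_of_nonneg'' (abs_nonneg z)).le hzJ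
    have hφz : 0 < φ |z| := hstrict _ (abs_nonneg z) (abs_ne_zero'' hzne)
    have hTz : φ.smulRight x |z| ∈ J := hJinv _ rfl |z| hzabs
    rw [ContinuousLinearMap.smulRight_apply] at hTz
    have hxJ : x ∈ J := by
      have hsm := J.smul_mem (φ |z|)⁻¹ hTz
      rwa [← mul_smul, inv_mul_cancel₀ hφz.ne', one_smul] at hsm
    apply hJtop
    rw [eq_top_iff]
    intro w _
    have hw : w ∈ closure {y : L | ∃ lam : ℝ, 0 ≤ lam ∧ |y| ≤ lam • x} := hdense w
    have hsub : {y : L | ∃ lam : ℝ, 0 ≤ lam ∧ |y| ≤ lam • x} ⊆ (J : Set L) := by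
      rintro y ⟨l, hl, hy⟩
      refine hJideal y (l • x) ?_ (J.smul_mem l hxJ)
      rwa [abs_of_nonneg'' (real_smul_nonneg hl hx0)]
    have hcl := closure_mono hsub
    rw [hJclosed.closure_eq] at hcl
    exact hcl hw
end

section
/- Let L be a normed Riesz space, x a quasi-interior point of L, and φ a strictly positive continuous functional with φ(x) = 1. If the rank-one idempotent P = x ⊗ φ is ideal-triangularizable (i.e., there is a maximal chain of closed order ideals each invariant under P), then L is one-dimensional. -/
open Filter Topology

section Aux
set_option linter.unusedSectionVars false
variable {L : Type*} [NormedAddCommGroup L] [Lattice L] [HasSolidNorm L] [IsOrderedAddMonoid L] [NormedSpace ℝ L]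

lemma aux_inf_zero_mono {u v c : L} (hu : 0 ≤ u) (hc : 0 ≤ c) (huv : u ≤ v)
    (h : v ⊓ c = 0) : u ⊓ c = 0 :=
  le_antisymm (le_trans (inf_le_inf_right c huv) h.le) (le_inf hu hc)

lemma aux_disj_add {a b c : L} (ha : 0 ≤ a) (hb : 0 ≤ b) (hc : 0 ≤ c)
    (h1 : a ⊓ c = 0) (h2 : b ⊓ c = 0) : (a + b) ⊓ c = 0 := by
  have h3 : (a + b) ⊓ c - a ≤ b ⊓ c := by
    refine le_inf ?_ ?_
    · exact sub_le_iff_le_add.mpr (inf_le_left.trans (add_comm a b).le)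
    · exact (sub_le_sub_right inf_le_right a).trans (sub_le_self c ha)
  rw [h2] at h3
  have h4 : (a + b) ⊓ c ≤ a := sub_nonpos.mp h3
  have h5 : (a + b) ⊓ c ≤ a ⊓ c := le_inf h4 inf_le_right
  rw [h1] at h5
  exact le_antisymm h5 (le_inf (add_nonneg ha hb) hc)

lemma aux_pow2_semiclosed {z : L} : ∀ k : ℕ, 0 ≤ (2 ^ k : ℕ) • z → 0 ≤ z := by
  intro k
  induction k generalizing z with
  | zero => simpa using id
  | succ m ih =>
      intro h
      have h' : 0 ≤ (2 ^ m : ℕ) • (2 • z) := by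
        rw [← mul_nsmul]
        rwa [pow_succ, mul_comm] at h
      exact nsmul_two_semiclosed (ih h')

lemma aux_real_smul_nonneg {r : ℝ} (hr : 0 ≤ r) {w : L} (hw : 0 ≤ w) : 0 ≤ r • w := by
  have hdy : ∀ (m k : ℕ), 0 ≤ ((m : ℝ) / 2 ^ k) • w := by
    intro m k
    apply aux_pow2_semiclosed k
    have heq : (2 ^ k : ℕ) • (((m : ℝ) / 2 ^ k) • w) = (m : ℕ) • w := by
      rw [← Nat.cast_smul_eq_nsmul ℝ, ← Nat.cast_smul_eq_nsmul ℝ m w, smul_smul]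
      congr 1
      push_cast
      field_simp
    rw [heq]
    exact nsmul_nonneg hw m
  have hseq : Tendsto (fun n : ℕ => ((⌊r * 2 ^ n⌋₊ : ℝ) / 2 ^ n) • w) atTop (𝓝 (r • w)) := by
    have hf : Tendsto (fun y : ℝ => (⌊r * y⌋₊ : ℝ) / y) atTop (𝓝 r) :=
      tendsto_nat_floor_mul_div_atTop hr
    have hg : Tendsto (fun n : ℕ => ((2 : ℝ) ^ n)) atTop atTop :=
      tendsto_pow_atTop_atTop_of_one_lt one_lt_two
    exact (hf.comp hg).smul tendsto_const_nhds
  exact isClosed_nonneg.mem_of_tendsto hseq (Filter.Eventually.of_forall fun n => hdy _ n)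

lemma aux_smul_mono {r : ℝ} (hr : 0 ≤ r) {u v : L} (huv : u ≤ v) : r • u ≤ r • v := by
  have h := aux_real_smul_nonneg hr (sub_nonneg.mpr huv)
  rw [smul_sub] at h
  exact sub_nonneg.mp h

lemma aux_abs_smul_le (r : ℝ) (w : L) : |r • w| ≤ |r| • |w| := by
  rcases le_total 0 r with hr | hr
  · rw [abs_of_nonneg hr]
    refine abs_le'.mpr ⟨aux_smul_mono hr (le_abs_self w), ?_⟩
    rw [← smul_neg]
    exact aux_smul_mono hr (neg_le_abs w)
  · rw [abs_of_nonpos hr]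
    refine abs_le'.mpr ⟨?_, ?_⟩
    · have : r • w = (-r) • (-w) := by rw [neg_smul, smul_neg, neg_neg]
      rw [this]
      exact aux_smul_mono (neg_nonneg.mpr hr) (neg_le_abs w)
    · have : -(r • w) = (-r) • w := by rw [neg_smul]
      rw [this]
      exact aux_smul_mono (neg_nonneg.mpr hr) (le_abs_self w)

lemma aux_disj_nsmul {a c : L} (ha : 0 ≤ a) (hc : 0 ≤ c) (h : a ⊓ c = 0) :
    ∀ n : ℕ, (n • a) ⊓ c = 0 := by
  intro n
  induction n with
  | zero => simpa using inf_eq_left.mpr hc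
  | succ k ih =>
      rw [succ_nsmul]
      exact aux_disj_add (nsmul_nonneg ha k) ha hc ih h

/-- The disjoint complement of a nonnegative element is a closed order ideal. -/
def disjComp (c : L) (hc : 0 ≤ c) : Submodule ℝ L where
  carrier := {w : L | |w| ⊓ c = 0}
  zero_mem' := by simpa using inf_eq_left.mpr hc
  add_mem' := by
    intro a b ha hb
    simp only [Set.mem_setOf_eq] at *
    have h := aux_disj_add (abs_nonneg a) (abs_nonneg b) hc ha hb
    exact aux_inf_zero_mono (abs_nonneg _) hc (abs_add_le a b) h
  smul_mem' := by
    intro r w hw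
    simp only [Set.mem_setOf_eq] at *
    have h2 : |r • w| ≤ (⌈|r|⌉₊ : ℕ) • |w| := by
      refine (aux_abs_smul_le r w).trans ?_
      rw [← Nat.cast_smul_eq_nsmul ℝ]
      have h3 := aux_real_smul_nonneg (sub_nonneg.mpr (Nat.le_ceil |r|)) (abs_nonneg w)
      rw [sub_smul] at h3
      exact sub_nonneg.mp h3
    exact aux_inf_zero_mono (abs_nonneg _) hc h2
      (aux_disj_nsmul (abs_nonneg w) hc hw _)

end Aux

theorem stmt4 {L : Type*} [NormedAddCommGroup L] [Lattice L] [HasSolidNorm L] [IsOrderedAddMonoid L] [NormedSpace ℝ L]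
    (x : L) (φ : L →L[ℝ] ℝ) (hx : QuasiInterior x) (hφ : StrictlyPosFunctional φ)
    (hφx : φ x = 1)
    (htri : IdealTriangularizable ({φ.smulRight x} : Set (L →L[ℝ] L))) :
    Module.finrank ℝ L = 1 := by
  obtain ⟨C, ⟨hCchain, hCideals⟩, hmax, hinv⟩ := htri
  have hx0 : (0:L) ≤ x := hx.1
  have hxne : x ≠ 0 := by
    intro h; rw [h, map_zero] at hφx; exact one_ne_zero hφx.symm
  -- Step A: every P-invariant closed order ideal is ⊥ or ⊤.
  have stepA : ∀ J : Submodule ℝ L, IsOrderIdeal J → IsClosed (J : Set L) →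
      InvariantUnder (φ.smulRight x) J → J = ⊥ ∨ J = ⊤ := by
    intro J hJid hJcl hJinv
    by_cases hbot : J = ⊥
    · exact Or.inl hbot
    right
    obtain ⟨y, hyJ, hy0⟩ := Submodule.exists_mem_ne_zero_of_ne_bot hbot
    have hay : |y| ∈ J := hJid |y| y (by rw [abs_abs]) hyJ
    have hPy : (φ.smulRight x) |y| = φ |y| • x := rfl
    have hyabs : |y| ≠ 0 := by
      intro h
      apply hy0
      have h1 : y ≤ 0 := h ▸ le_abs_self y
      have h2 : -y ≤ 0 := h ▸ neg_le_abs y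
      exact le_antisymm h1 (neg_nonpos.mp h2)
    have hφy : 0 < φ |y| := hφ.2 |y| (abs_nonneg y) hyabs
    have hsx : φ |y| • x ∈ J := by rw [← hPy]; exact hJinv _ hay
    have hxJ : x ∈ J := by
      have := J.smul_mem (φ |y|)⁻¹ hsx
      rwa [inv_smul_smul₀ hφy.ne'] at this
    -- the dense set is contained in J
    have hsub : {y : L | ∃ lam : ℝ, 0 ≤ lam ∧ |y| ≤ lam • x} ⊆ (J : Set L) := by
      rintro w ⟨lam, hlam, hw⟩
      have hlx : lam • x ∈ J := J.smul_mem lam hxJ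
      refine hJid w (lam • x) ?_ hlx
      rwa [abs_of_nonneg (aux_real_smul_nonneg hlam hx0)]
    have hclsub : closure {y : L | ∃ lam : ℝ, 0 ≤ lam ∧ |y| ≤ lam • x} ⊆ (J : Set L) :=
      hJcl.closure_subset_iff.mpr hsub
    have huniv : (Set.univ : Set L) ⊆ (J : Set L) := by
      rw [← hx.2.closure_eq]; exact hclsub
    exact Submodule.eq_top_iff'.mpr fun z => huniv (Set.mem_univ z)
  -- every member of C is ⊥ or ⊤
  have hCtriv : ∀ K ∈ C, K = ⊥ ∨ K = ⊤ := fun K hK =>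
    stepA K (hCideals K hK).1 (hCideals K hK).2
      (hinv K hK (φ.smulRight x) (Set.mem_singleton _))
  -- Step B: every closed order ideal is ⊥ or ⊤
  have stepB : ∀ J : Submodule ℝ L, IsOrderIdeal J → IsClosed (J : Set L) →
      J = ⊥ ∨ J = ⊤ := by
    intro J hJid hJcl
    by_contra hcon
    push_neg at hcon
    have hJcomp : ∀ K ∈ C, J ≤ K ∨ K ≤ J := by
      intro K hK
      rcases hCtriv K hK with h | h
      · exact Or.inr (h ▸ bot_le)
      · exact Or.inl (h ▸ le_top)
    have hchain' : ClosedIdealChain (insert J C) := by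
      constructor
      · exact hCchain.insert (fun K hK _ => hJcomp K hK)
      · rintro K (rfl | hK)
        · exact ⟨hJid, hJcl⟩
        · exact hCideals K hK
    have := hmax (insert J C) hchain' (Set.subset_insert J C)
    have hJC : J ∈ C := this ▸ Set.mem_insert J C
    rcases hCtriv J hJC with h | h
    · exact hcon.1 h
    · exact hcon.2 h
  -- Step C: L is totally ordered
  have stepC : ∀ y : L, 0 ≤ y ∨ y ≤ 0 := by
    intro y
    by_contra hcon
    push_neg at hcon
    have hpos : y⁺ ≠ 0 := fun h => hcon.2 (posPart_eq_zero.mp h)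
    have hneg : y⁻ ≠ 0 := fun h => hcon.1 (negPart_eq_zero.mp h)
    set J := disjComp (y⁺) (posPart_nonneg y) with hJdef
    have hJmem : ∀ w : L, w ∈ J ↔ |w| ⊓ y⁺ = 0 := fun w => Iff.rfl
    have hJid : IsOrderIdeal J := by
      intro u v huv hv
      have hv' : |v| ⊓ y⁺ = 0 := hv
      exact aux_inf_zero_mono (abs_nonneg u) (posPart_nonneg y) huv hv'
    have hJcl : IsClosed (J : Set L) := by
      have : (J : Set L) = (fun w : L => |w| ⊓ y⁺) ⁻¹' {0} := rfl
      rw [this]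
      have habs : Continuous fun w : L => |w| := by
        have heq : (fun w : L => |w|) = fun w : L => w ⊔ -w := rfl
        rw [heq]
        exact continuous_id.sup continuous_neg
      exact isClosed_singleton.preimage (habs.inf continuous_const)
    have hJnbot : J ≠ ⊥ := by
      intro h
      have : y⁻ ∈ J := by
        rw [hJmem, abs_of_nonneg (negPart_nonneg y), inf_comm]
        exact posPart_inf_negPart_eq_zero y
      rw [h, Submodule.mem_bot] at this
      exact hneg this
    have hJntop : J ≠ ⊤ := by
      intro h
      have : y⁺ ∈ J := h ▸ Submodule.mem_top
      rw [hJmem, abs_of_nonneg (posPart_nonneg y), inf_idem] at this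
      exact hpos this
    rcases stepB J hJid hJcl with h | h
    · exact hJnbot h
    · exact hJntop h
  -- Final step
  apply finrank_eq_one x hxne
  intro y
  refine ⟨φ y, ?_⟩
  have hz : φ (y - φ y • x) = 0 := by
    rw [map_sub, map_smul, hφx, smul_eq_mul, mul_one, sub_self]
  have hz0 : y - φ y • x = 0 := by
    rcases stepC (y - φ y • x) with h | h
    · by_contra hne
      exact (hφ.2 _ h hne).ne' hz
    · by_contra hne
      have h1 : (0:L) ≤ -(y - φ y • x) := neg_nonneg.mpr h
      have h2 : -(y - φ y • x) ≠ 0 := fun hh => hne (by simpa using neg_eq_zero.mp hh)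
      have := hφ.2 _ h1 h2
      rw [map_neg, hz, neg_zero] at this
      exact lt_irrefl 0 this
  have : y = φ y • x := by rw [← sub_eq_zero]; exact hz0
  exact this.symm
end

section
/- Let L be a Banach lattice with order continuous norm, T a positive operator on L that is strictly positive together with its adjoint, and suppose T leaves a closed ideal J invariant, decomposing as an upper block-triangular operator [[T1, T2],[0, T4]] with respect to L = J ⊕ J^d. If T is idempotent, then T2 = 0, i.e., T = T1 ⊕ T4. -/
open Filter Topology

section Aux8

variable {L : Type*} [NormedAddCommGroup L] [Lattice L] [HasSolidNorm L] [IsOrderedAddMonoid L] [NormedSpace ℝ L]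

private lemma snorm8 {a b : L} (ha : 0 ≤ a) (hab : a ≤ b) : ‖a‖ ≤ ‖b‖ :=
  norm_le_norm_of_abs_le_abs
    (by rw [abs_of_nonneg ha, abs_of_nonneg (ha.trans hab)]; exact hab)

private lemma inf_add_le8 {a b c : L} (ha : 0 ≤ a) (hb : 0 ≤ b) (hc : 0 ≤ c) :
    (a + b) ⊓ c ≤ a ⊓ c + b ⊓ c := by
  have s1 : (a + b) ⊓ c ≤ a ⊓ c + b := by
    rw [← sub_le_iff_le_add]
    have e1 : (a + b) ⊓ c - b = (a + b - b) ⊓ (c - b) := by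
      have h := add_inf (a + b) c (-b)
      rw [add_comm (-b) ((a + b) ⊓ c), add_comm (-b) (a + b), add_comm (-b) c] at h
      simpa [sub_eq_add_neg] using h
    calc (a + b) ⊓ c - b = (a + b - b) ⊓ (c - b) := e1
      _ = a ⊓ (c - b) := by rw [add_sub_cancel_right]
      _ ≤ a ⊓ c := inf_le_inf_left a (sub_le_self c hb)
  have s2 : (a + b) ⊓ c ≤ a ⊓ c + c :=
    le_trans inf_le_right (le_add_of_nonneg_left (le_inf ha hc))
  calc (a + b) ⊓ c ≤ (a ⊓ c + b) ⊓ (a ⊓ c + c) := le_inf s1 s2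
    _ = a ⊓ c + b ⊓ c := (add_inf b c (a ⊓ c)).symm

private lemma inf_nsmul_zero8 {a b : L} (ha : 0 ≤ a) (hb : 0 ≤ b) (hab : a ⊓ b = 0) :
    ∀ n : ℕ, a ⊓ (n • b) = 0 := by
  intro n
  induction n with
  | zero => simpa using inf_eq_right.mpr ha
  | succ n ih =>
    have h0 : (0 : L) ≤ a ⊓ ((n + 1) • b) := le_inf ha (nsmul_nonneg hb (n + 1))
    have h1 : a ⊓ ((n + 1) • b) ≤ 0 := by
      have hs : (n + 1) • b = n • b + b := succ_nsmul b n
      rw [hs, inf_comm]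
      calc (n • b + b) ⊓ a ≤ (n • b) ⊓ a + b ⊓ a := inf_add_le8 (nsmul_nonneg hb n) hb ha
        _ = 0 := by rw [inf_comm, ih, inf_comm, hab, add_zero]
    exact le_antisymm h1 h0

private lemma nsmul_nonneg_imp8 {y : L} {n : ℕ} (hn : 0 < n) (h : 0 ≤ n • y) : 0 ≤ y := by
  have hsub : n • y⁻ ≤ n • y⁺ := by
    have hd : n • y = n • y⁺ - n • y⁻ := by rw [← smul_sub, posPart_sub_negPart]
    rw [hd] at h
    exact sub_nonneg.mp h
  have h1 : y⁻ ≤ n • y⁺ := by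
    obtain ⟨k, rfl⟩ := Nat.exists_eq_succ_of_ne_zero hn.ne'
    calc y⁻ ≤ k • y⁻ + y⁻ := le_add_of_nonneg_left (nsmul_nonneg (negPart_nonneg y) k)
      _ = (k + 1) • y⁻ := (succ_nsmul _ k).symm
      _ ≤ (k + 1) • y⁺ := hsub
  have h2 : y⁻ ⊓ (n • y⁺) = 0 := by
    have := posPart_inf_negPart_eq_zero y
    exact inf_nsmul_zero8 (negPart_nonneg y) (posPart_nonneg y)
      (by rw [inf_comm]; exact this) n
  have h3 : y⁻ = 0 := by
    have := inf_eq_left.mpr h1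
    rw [h2] at this
    exact this.symm
  exact negPart_eq_zero.mp h3

private lemma smul_nonneg8 {t : ℝ} (ht : 0 ≤ t) {x : L} (hx : 0 ≤ x) : 0 ≤ t • x := by
  have hq : ∀ q : ℚ, 0 ≤ q → 0 ≤ (q : ℝ) • x := by
    intro q hq0
    have hnum : (0 : ℤ) ≤ q.num := Rat.num_nonneg.mpr hq0
    have hkey : (q.den : ℕ) • ((q : ℝ) • x) = q.num.toNat • x := by
      rw [← Nat.cast_smul_eq_nsmul ℝ q.den, smul_smul, ← Nat.cast_smul_eq_nsmul ℝ q.num.toNat]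
      congr 1
      have h1 : ((q.num.toNat : ℕ) : ℝ) = ((q.num : ℤ) : ℝ) := by
        exact_mod_cast congrArg (fun z : ℤ => (z : ℝ)) (Int.toNat_of_nonneg hnum)
      rw [h1, Rat.cast_def]
      have hden : ((q.den : ℝ)) ≠ 0 := by exact_mod_cast q.den_nz
      field_simp
    have := nsmul_nonneg_imp8 (n := q.den) q.pos (by rw [hkey]; exact nsmul_nonneg hx _)
    exact this
  have hseq : ∀ n : ℕ, ∃ q : ℚ, t < (q : ℝ) ∧ (q : ℝ) < t + 1 / (n + 1) := by
    intro n
    have hpos : (0:ℝ) < 1 / ((n : ℝ) + 1) := by positivity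
    exact exists_rat_btwn (by linarith)
  choose q hq1 hq2 using hseq
  have hq0 : ∀ n, 0 ≤ q n := by
    intro n
    have : (0 : ℝ) < q n := lt_of_le_of_lt ht (hq1 n)
    exact_mod_cast this.le
  have htend : Filter.Tendsto (fun n : ℕ => ((q n : ℝ))) Filter.atTop (nhds t) := by
    have h1 : Filter.Tendsto (fun n : ℕ => t + 1 / ((n : ℝ) + 1)) Filter.atTop (nhds (t + 0)) :=
      tendsto_const_nhds.add tendsto_one_div_add_atTop_nhds_zero_nat
    rw [add_zero] at h1
    exact tendsto_of_tendsto_of_tendsto_of_le_of_le tendsto_const_nhds h1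
      (fun n => (hq1 n).le) (fun n => (hq2 n).le)
  have hlim : Filter.Tendsto (fun n : ℕ => ((q n : ℝ)) • x) Filter.atTop (nhds (t • x)) :=
    htend.smul_const x
  exact isClosed_nonneg.mem_of_tendsto hlim
    (Filter.Eventually.of_forall fun n => hq (q n) (hq0 n))

private lemma smul_le_smul8 {t : ℝ} (ht : 0 ≤ t) {x y : L} (h : x ≤ y) : t • x ≤ t • y := by
  have := smul_nonneg8 ht (sub_nonneg.mpr h)
  rw [smul_sub] at this
  exact sub_nonneg.mp this

private lemma posPart_smul8 {t : ℝ} (ht : 0 < t) (x : L) : (t • x)⁺ = t • x⁺ := by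
  apply le_antisymm
  · refine sup_le ?_ ?_
    · exact smul_le_smul8 ht.le (le_posPart x)
    · exact smul_nonneg8 ht.le (posPart_nonneg x)
  · have h1 : x⁺ ≤ t⁻¹ • ((t • x)⁺) := by
      refine sup_le ?_ ?_
      · have := smul_le_smul8 (inv_nonneg.mpr ht.le) (le_posPart (t • x))
        rwa [smul_smul, inv_mul_cancel₀ ht.ne', one_smul] at this
      · exact smul_nonneg8 (inv_nonneg.mpr ht.le) (posPart_nonneg (t • x))
    have := smul_le_smul8 ht.le h1
    rwa [smul_smul, mul_inv_cancel₀ ht.ne', one_smul] at this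

/-- Every positive element is strictly separated by some positive functional. -/
private lemma exists_pos_functional8 (u : L) (hu : 0 ≤ u) (hne : u ≠ 0) :
    ∃ φ : L →L[ℝ] ℝ, (∀ w : L, 0 ≤ w → 0 ≤ φ w) ∧ 0 < φ u := by
  classical
  have Nadd : ∀ x y : L, ‖(x + y)⁺‖ ≤ ‖x⁺‖ + ‖y⁺‖ := by
    intro x y
    have h1 : (x + y)⁺ ≤ x⁺ + y⁺ :=
      sup_le (add_le_add (le_posPart x) (le_posPart y))
        (add_nonneg (posPart_nonneg x) (posPart_nonneg y))
    exact (snorm8 (posPart_nonneg _) h1).trans (norm_add_le _ _)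
  have Nhom : ∀ c : ℝ, 0 < c → ∀ x : L, ‖(c • x)⁺‖ = c * ‖x⁺‖ := by
    intro c hc x
    rw [posPart_smul8 hc, norm_smul, Real.norm_of_nonneg hc.le]
  have hH : ∀ c : ℝ, c • u = 0 → (RingHom.id ℝ) c • ‖u‖ = 0 := by
    intro c hc
    rcases eq_or_ne c 0 with h | h
    · simp [h]
    · exfalso; exact hne (by
        have := congrArg (fun w => c⁻¹ • w) hc
        simpa [smul_smul, inv_mul_cancel₀ h] using this)
  have hfle : ∀ z : (LinearPMap.mkSpanSingleton' u ‖u‖ hH).domain,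
      (LinearPMap.mkSpanSingleton' u ‖u‖ hH) z ≤ ‖((z : L))⁺‖ := by
    rintro ⟨z, hz⟩
    have hz' : z ∈ Submodule.span ℝ {u} := by
      rw [← LinearPMap.domain_mkSpanSingleton u ‖u‖ hH]
      exact hz
    obtain ⟨c, rfl⟩ := Submodule.mem_span_singleton.mp hz'
    rw [LinearPMap.mkSpanSingleton'_apply u ‖u‖ hH c hz]
    rcases le_or_gt 0 c with h | h
    · have h0 : 0 ≤ c • u := smul_nonneg8 h hu
      show c • ‖u‖ ≤ _
      rw [posPart_of_nonneg h0, norm_smul, Real.norm_of_nonneg h, smul_eq_mul]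
    · have h0 : c • u ≤ 0 := by
        have := smul_nonneg8 (neg_nonneg.mpr h.le) hu
        rw [neg_smul] at this
        exact neg_nonneg.mp this
      show c • ‖u‖ ≤ _
      rw [posPart_eq_zero.mpr h0, norm_zero, smul_eq_mul]
      exact mul_nonpos_of_nonpos_of_nonneg h.le (norm_nonneg u)
  obtain ⟨g, hgf, hgle⟩ :=
    exists_extension_of_le_sublinear (LinearPMap.mkSpanSingleton' u ‖u‖ hH)
      (fun y => ‖y⁺‖) Nhom Nadd hfle
  have humem : u ∈ (LinearPMap.mkSpanSingleton' u ‖u‖ hH).domain := by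
    rw [LinearPMap.domain_mkSpanSingleton]
    exact Submodule.mem_span_singleton_self u
  have humem' : (1 : ℝ) • u ∈ (LinearPMap.mkSpanSingleton' u ‖u‖ hH).domain := by
    rw [one_smul]
    exact humem
  have hgu : g u = ‖u‖ := by
    have h1 := hgf ⟨(1 : ℝ) • u, humem'⟩
    have h2 : (LinearPMap.mkSpanSingleton' u ‖u‖ hH) ⟨(1 : ℝ) • u, humem'⟩
        = (1 : ℝ) • ‖u‖ := LinearPMap.mkSpanSingleton'_apply u ‖u‖ hH 1 humem'
    rw [h2] at h1
    have h3 : g ((1 : ℝ) • u) = (1 : ℝ) • ‖u‖ := h1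
    rwa [one_smul, one_smul] at h3
  have hgpos : ∀ w : L, 0 ≤ w → 0 ≤ g w := by
    intro w hw
    have := hgle (-w)
    rw [posPart_neg, negPart_eq_zero.mpr hw, norm_zero, map_neg] at this
    linarith
  have hgcont : ∀ y : L, ‖g y‖ ≤ 1 * ‖y‖ := by
    intro y
    rw [one_mul, Real.norm_eq_abs, abs_le]
    constructor
    · have h1 := hgle (-y)
      rw [posPart_neg, map_neg] at h1
      have h2 : ‖y⁻‖ ≤ ‖y‖ := by
        have : y⁻ ≤ |y| := by
          rw [← posPart_add_negPart y]
          exact le_add_of_nonneg_left (posPart_nonneg y)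
        calc ‖y⁻‖ ≤ ‖|y|‖ := snorm8 (negPart_nonneg y) this
          _ = ‖y‖ := norm_abs_eq_norm y
      linarith
    · have h1 := hgle y
      have h2 : ‖y⁺‖ ≤ ‖y‖ := by
        have : y⁺ ≤ |y| := by
          rw [← posPart_add_negPart y]
          exact le_add_of_nonneg_right (negPart_nonneg y)
        calc ‖y⁺‖ ≤ ‖|y|‖ := snorm8 (posPart_nonneg y) this
          _ = ‖y‖ := norm_abs_eq_norm y
      linarith
  refine ⟨g.mkContinuous 1 hgcont, ?_, ?_⟩
  · intro w hw
    exact hgpos w hw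
  · show (0 : ℝ) < g u
    rw [hgu]
    exact norm_pos_iff.mpr hne

/-- In a complete normed lattice group with order continuous norm, every nonempty
upward-directed order-bounded set has a least upper bound, lying in its closure. -/
private lemma lub_of_directed8 [CompleteSpace L] (hoc : OrderContinuousNorm L)
    {A : Set L} (hne : A.Nonempty) (hdir : DirectedOn (· ≤ ·) A) (hbdd : BddAbove A) :
    ∃ u : L, IsLUB A u ∧ u ∈ closure A := by
  classical
  obtain ⟨a₀, ha₀⟩ := hne
  obtain ⟨b₀, hb₀⟩ := hbdd
  set B : Set L := {d | ∃ b ∈ upperBounds A, ∃ a ∈ A, d = b - a} with hB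
  have hBne : B.Nonempty := ⟨b₀ - a₀, b₀, hb₀, a₀, ha₀, rfl⟩
  have hBdir : DirectedOn (· ≥ ·) B := by
    rintro _ ⟨b₁, hb₁, a₁, ha₁, rfl⟩ _ ⟨b₂, hb₂, a₂, ha₂, rfl⟩
    obtain ⟨a, ha, h1, h2⟩ := hdir a₁ ha₁ a₂ ha₂
    exact ⟨(b₁ ⊓ b₂) - a,
      ⟨b₁ ⊓ b₂, fun x hx => le_inf (hb₁ hx) (hb₂ hx), a, ha, rfl⟩,
      sub_le_sub inf_le_left h1, sub_le_sub inf_le_right h2⟩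
  have hglb : IsGLB B 0 := by
    constructor
    · rintro _ ⟨b, hb, a, ha, rfl⟩
      exact sub_nonneg.mpr (hb ha)
    · intro c hc
      have step : ∀ b ∈ upperBounds A, b - c⁺ ∈ upperBounds A := by
        intro b hb a ha
        have h1 : a + c ≤ b := by
          have := hc ⟨b, hb, a, ha, rfl⟩
          rw [add_comm]
          exact le_sub_iff_add_le.mp this
        have h2 : a + c⁺ ≤ b := by
          have he : a + c⁺ = (a + c) ⊔ (a + 0) := add_sup c 0 a
          rw [he, add_zero]
          exact sup_le h1 (hb ha)
        exact le_sub_iff_add_le.mpr h2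
      have iter : ∀ n : ℕ, b₀ - (n : ℝ) • c⁺ ∈ upperBounds A := by
        intro n
        induction n with
        | zero =>
          rw [Nat.cast_zero, zero_smul, sub_zero]
          exact hb₀
        | succ n ih =>
          have h1 := step _ ih
          have h2 : b₀ - (((n + 1 : ℕ)) : ℝ) • c⁺ = (b₀ - (n : ℝ) • c⁺) - c⁺ := by
            push_cast
            rw [add_smul, one_smul]
            abel
          rw [h2]
          exact h1
      have hnorm : ∀ n : ℕ, (n : ℝ) * ‖c⁺‖ ≤ ‖b₀ - a₀‖ := by
        intro n
        have h1 : (n : ℝ) • c⁺ ≤ b₀ - a₀ := le_sub_comm.mp (iter n ha₀)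
        have h0 : (0 : L) ≤ (n : ℝ) • c⁺ :=
          smul_nonneg8 (by positivity) (posPart_nonneg c)
        calc (n : ℝ) * ‖c⁺‖ = ‖(n : ℝ) • c⁺‖ := by
              rw [norm_smul, Real.norm_natCast]
          _ ≤ ‖b₀ - a₀‖ := snorm8 h0 h1
      have hc0 : c⁺ = 0 := by
        by_contra h
        have hp : 0 < ‖c⁺‖ := norm_pos_iff.mpr h
        obtain ⟨n, hn⟩ := exists_nat_gt (‖b₀ - a₀‖ / ‖c⁺‖)
        have h1 := hnorm n
        have h2 : ‖b₀ - a₀‖ < (n : ℝ) * ‖c⁺‖ := (div_lt_iff₀ hp).mp hn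
        linarith
      exact posPart_eq_zero.mp hc0
  have hsel : ∀ n : ℕ, ∃ d ∈ B, ‖d‖ < 1 / ((n : ℝ) + 1) :=
    fun n => hoc B hBne hBdir hglb _ (by positivity)
  choose d hdB hdlt using hsel
  have hunp : ∀ n : ℕ, ∃ b ∈ upperBounds A, ∃ a ∈ A, d n = b - a := hdB
  choose b hbub a haA hdeq using hunp
  choose fD hfA hf1 hf2 using hdir
  obtain ⟨cc, hccA, hccmono, hccge⟩ :
      ∃ cc : ℕ → L, (∀ n, cc n ∈ A) ∧ (∀ n, cc n ≤ cc (n + 1)) ∧ (∀ n, a n ≤ cc n) := by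
    let c : ℕ → {x : L // x ∈ A} := fun n =>
      Nat.rec ⟨a 0, haA 0⟩
        (fun n p => ⟨fD p.1 p.2 (a (n + 1)) (haA (n + 1)),
          hfA p.1 p.2 (a (n + 1)) (haA (n + 1))⟩) n
    refine ⟨fun n => (c n).1, fun n => (c n).2, fun n => ?_, fun n => ?_⟩
    · exact hf1 (c n).1 (c n).2 (a (n + 1)) (haA (n + 1))
    · cases n with
      | zero => exact le_refl _
      | succ n => exact hf2 (c n).1 (c n).2 (a (n + 1)) (haA (n + 1))
  have hccmono' : Monotone cc := monotone_nat_of_le_succ hccmono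
  have key : ∀ n m : ℕ, n ≤ m → ‖cc m - cc n‖ < 1 / ((n : ℝ) + 1) := by
    intro n m hnm
    have h1 : 0 ≤ cc m - cc n := sub_nonneg.mpr (hccmono' hnm)
    have h2 : cc m - cc n ≤ b n - cc n := sub_le_sub_right (hbub n (hccA m)) _
    have h3 : 0 ≤ b n - cc n := sub_nonneg.mpr (hbub n (hccA n))
    have h4 : b n - cc n ≤ b n - a n := sub_le_sub_left (hccge n) _
    calc ‖cc m - cc n‖ ≤ ‖b n - cc n‖ := snorm8 h1 h2
      _ ≤ ‖b n - a n‖ := snorm8 h3 h4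
      _ = ‖d n‖ := by rw [hdeq n]
      _ < 1 / ((n : ℝ) + 1) := hdlt n
  have hcauchy : CauchySeq cc := by
    rw [Metric.cauchySeq_iff']
    intro ε hε
    obtain ⟨N, hN⟩ := exists_nat_one_div_lt (K := ℝ) hε
    refine ⟨N, fun n hn => ?_⟩
    rw [dist_eq_norm]
    exact (key N n hn).trans hN
  obtain ⟨u, hu⟩ := cauchySeq_tendsto_of_complete hcauchy
  refine ⟨u, ⟨?_, ?_⟩, ?_⟩
  · intro x hx
    have h5 : ∀ n, (x - cc n)⁺ ≤ b n - cc n := fun n =>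
      sup_le (sub_le_sub_right (hbub n hx) _) (sub_nonneg.mpr (hbub n (hccA n)))
    have h6 : Filter.Tendsto (fun n => (x - cc n)⁺) Filter.atTop (nhds ((x - u)⁺)) :=
      (continuous_posPart.tendsto _).comp (tendsto_const_nhds.sub hu)
    have h7 : Filter.Tendsto (fun n => (x - cc n)⁺) Filter.atTop (nhds 0) := by
      refine squeeze_zero_norm (fun n => ?_) tendsto_one_div_add_atTop_nhds_zero_nat
      have hpn : (0:L) ≤ (x - cc n)⁺ := posPart_nonneg _
      calc ‖(x - cc n)⁺‖ ≤ ‖b n - cc n‖ := snorm8 hpn (h5 n)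
        _ ≤ ‖b n - a n‖ := snorm8 (sub_nonneg.mpr (hbub n (hccA n)))
            (sub_le_sub_left (hccge n) _)
        _ = ‖d n‖ := by rw [hdeq n]
        _ ≤ 1 / ((n : ℝ) + 1) := (hdlt n).le
    have h8 : (x - u)⁺ = 0 := tendsto_nhds_unique h6 h7
    have := posPart_eq_zero.mp h8
    exact sub_nonpos.mp this
  · intro v hv
    exact le_of_tendsto' hu fun n => hv (hccA n)
  · exact mem_closure_of_tendsto hu (Filter.Eventually.of_forall fun n => hccA n)

end Aux8

theorem stmt8 {L : Type*} [NormedAddCommGroup L] [Lattice L] [HasSolidNorm L] [IsOrderedAddMonoid L] [NormedSpace ℝ L]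
    [CompleteSpace L] (hoc : OrderContinuousNorm L)
    (T : L →L[ℝ] L) (hT : StrictlyPosOp T) (hT' : AdjointStrictlyPos T)
    (J : Submodule ℝ L) (hJ : IsOrderIdeal J) (hJc : IsClosed (J : Set L))
    (hinv : InvariantUnder T J) (hidem : T.comp T = T) :
    ∀ x : L, (∀ j ∈ J, |x| ⊓ |j| = 0) → ∀ j ∈ J, |T x| ⊓ |j| = 0 := by
  classical
  have hTmono : ∀ {w₁ w₂ : L}, w₁ ≤ w₂ → T w₁ ≤ T w₂ := by
    intro w₁ w₂ h
    have := hT.1 (w₂ - w₁) (sub_nonneg.mpr h)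
    rw [map_sub] at this
    exact sub_nonneg.mp this
  have hTT : ∀ y : L, T (T y) = T y := by
    intro y
    have := ContinuousLinearMap.ext_iff.mp hidem y
    rwa [ContinuousLinearMap.comp_apply] at this
  set S : L → Set L := fun y => {w | ∃ j ∈ J, 0 ≤ j ∧ w = y ⊓ j} with hS
  have habsJ : ∀ j ∈ J, |j| ∈ J := fun j hj => hJ |j| j (by rw [abs_abs]) hj
  have hex : ∀ y : L, 0 ≤ y → ∃ u : L, IsLUB (S y) u ∧ u ∈ closure (S y) := by
    intro y hy
    apply lub_of_directed8 hoc
    · exact ⟨0, 0, J.zero_mem, le_refl 0, (inf_eq_right.mpr hy).symm⟩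
    · rintro _ ⟨j₁, h₁, h₁0, rfl⟩ _ ⟨j₂, h₂, h₂0, rfl⟩
      have hmem : j₁ ⊔ j₂ ∈ J := by
        refine hJ (j₁ ⊔ j₂) (j₁ + j₂) ?_ (J.add_mem h₁ h₂)
        rw [abs_of_nonneg (le_trans h₁0 le_sup_left),
          abs_of_nonneg (add_nonneg h₁0 h₂0)]
        exact sup_le (le_add_of_nonneg_right h₂0) (le_add_of_nonneg_left h₁0)
      exact ⟨y ⊓ (j₁ ⊔ j₂), ⟨j₁ ⊔ j₂, hmem, le_trans h₁0 le_sup_left, rfl⟩,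
        inf_le_inf_left y le_sup_left, inf_le_inf_left y le_sup_right⟩
    · exact ⟨y, by rintro _ ⟨j, _, _, rfl⟩; exact inf_le_left⟩
  choose pf hlub hclos using hex
  have hcongr : ∀ (y z : L) (h : y = z) (hy : 0 ≤ y) (hz : 0 ≤ z), pf y hy = pf z hz := by
    intro y z h hy hz; subst h; rfl
  have hmemJ : ∀ (y : L) (hy : 0 ≤ y), pf y hy ∈ J := by
    intro y hy
    have h1 : S y ⊆ (J : Set L) := by
      rintro _ ⟨j, hj, hj0, rfl⟩
      refine hJ (y ⊓ j) j ?_ hj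
      rw [abs_of_nonneg (le_inf hy hj0), abs_of_nonneg hj0]
      exact inf_le_right
    have h2 : closure (S y) ⊆ (J : Set L) := by
      calc closure (S y) ⊆ closure (J : Set L) := closure_mono h1
        _ = (J : Set L) := hJc.closure_eq
    exact h2 (hclos y hy)
  have hnng : ∀ (y : L) (hy : 0 ≤ y), 0 ≤ pf y hy := by
    intro y hy
    exact (hlub y hy).1 ⟨0, J.zero_mem, le_refl 0, (inf_eq_right.mpr hy).symm⟩
  have hley : ∀ (y : L) (hy : 0 ≤ y), pf y hy ≤ y := by
    intro y hy
    exact (hlub y hy).2 (by rintro _ ⟨j, _, _, rfl⟩; exact inf_le_left)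
  have hzero : ∀ (y : L) (hy : 0 ≤ y), (∀ j ∈ J, 0 ≤ j → y ⊓ j = 0) → pf y hy = 0 := by
    intro y hy h
    refine le_antisymm ((hlub y hy).2 ?_) (hnng y hy)
    rintro _ ⟨j, hj, hj0, rfl⟩
    rw [h j hj hj0]
  have hdisj : ∀ (y : L) (hy : 0 ≤ y), ∀ j ∈ J, 0 ≤ j → (y - pf y hy) ⊓ j = 0 := by
    intro y hy j hj hj0
    set c := (y - pf y hy) ⊓ j with hc
    have hc0 : 0 ≤ c := le_inf (sub_nonneg.mpr (hley y hy)) hj0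
    have hcle : c ≤ y - pf y hy := inf_le_left
    have hcJ : c ∈ J := by
      refine hJ c j ?_ hj
      rw [abs_of_nonneg hc0, abs_of_nonneg hj0]
      exact inf_le_right
    have hsum : pf y hy + c ≤ y := by
      have := le_sub_iff_add_le.mp hcle
      rwa [add_comm] at this
    have hmem : pf y hy + c ∈ S y :=
      ⟨pf y hy + c, J.add_mem (hmemJ y hy) hcJ, add_nonneg (hnng y hy) hc0,
        (inf_eq_right.mpr hsum).symm⟩
    have hle2 : pf y hy + c ≤ pf y hy := (hlub y hy).1 hmem
    exact le_antisymm ((add_le_iff_nonpos_right _).mp hle2) hc0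
  have hadd : ∀ (y : L) (hy : 0 ≤ y) (w : L) (hw : 0 ≤ w),
      pf (y + w) (add_nonneg hy hw) = pf y hy + pf w hw := by
    intro y hy w hw
    apply le_antisymm
    · refine (hlub (y + w) (add_nonneg hy hw)).2 ?_
      rintro _ ⟨j, hj, hj0, rfl⟩
      calc (y + w) ⊓ j ≤ y ⊓ j + w ⊓ j := inf_add_le8 hy hw hj0
        _ ≤ pf y hy + pf w hw :=
          add_le_add ((hlub y hy).1 ⟨j, hj, hj0, rfl⟩) ((hlub w hw).1 ⟨j, hj, hj0, rfl⟩)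
    · have hst : ∀ s ∈ S y, ∀ t ∈ S w, s + t ≤ pf (y + w) (add_nonneg hy hw) := by
        rintro _ ⟨j₁, hj₁, hj₁0, rfl⟩ _ ⟨j₂, hj₂, hj₂0, rfl⟩
        have h1 : y ⊓ j₁ + w ⊓ j₂ ≤ (y + w) ⊓ (j₁ + j₂) :=
          le_inf (add_le_add inf_le_left inf_le_left)
            (add_le_add inf_le_right inf_le_right)
        exact h1.trans ((hlub (y + w) (add_nonneg hy hw)).1
          ⟨j₁ + j₂, J.add_mem hj₁ hj₂, add_nonneg hj₁0 hj₂0, rfl⟩)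
      have h2 : ∀ s ∈ S y, pf w hw ≤ pf (y + w) (add_nonneg hy hw) - s := by
        intro s hs
        refine (hlub w hw).2 fun t ht => ?_
        rw [le_sub_iff_add_le, add_comm]
        exact hst s hs t ht
      have h3 : pf y hy ≤ pf (y + w) (add_nonneg hy hw) - pf w hw := by
        refine (hlub y hy).2 fun s hs => ?_
        exact le_sub_comm.mp (h2 s hs)
      exact le_sub_iff_add_le.mp h3
  set pp : L → L := fun y => pf y⁺ (posPart_nonneg y) - pf y⁻ (negPart_nonneg y) with hppdef
  have hrep : ∀ (aa : L) (ha : 0 ≤ aa) (bb : L) (hb : 0 ≤ bb),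
      pp (aa - bb) = pf aa ha - pf bb hb := by
    intro aa ha bb hb
    set y := aa - bb with hy
    have hkey : y⁺ + bb = y⁻ + aa := by
      have h1 : y⁺ - y⁻ = aa - bb := by rw [posPart_sub_negPart]
      have h2 := sub_eq_sub_iff_add_eq_add.mp h1
      rw [h2]; exact add_comm aa y⁻
    have h2 : pf (y⁺ + bb) (add_nonneg (posPart_nonneg y) hb)
        = pf (y⁻ + aa) (add_nonneg (negPart_nonneg y) ha) :=
      hcongr _ _ hkey _ _
    rw [hadd y⁺ (posPart_nonneg y) bb hb, hadd y⁻ (negPart_nonneg y) aa ha] at h2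
    show pf y⁺ (posPart_nonneg y) - pf y⁻ (negPart_nonneg y) = pf aa ha - pf bb hb
    rw [sub_eq_sub_iff_add_eq_add, h2]
    exact add_comm _ _
  have hpp_pos : ∀ (y : L) (hy : 0 ≤ y), pp y = pf y hy := by
    intro y hy
    have h0 : pp y = pp (y - 0) := by rw [sub_zero]
    have hz0 : pf 0 le_rfl = (0 : L) :=
      hzero 0 le_rfl (fun j hj hj0 => inf_eq_left.mpr hj0)
    rw [h0, hrep y hy 0 le_rfl, hz0, sub_zero]
  have hppadd : ∀ y w : L, pp (y + w) = pp y + pp w := by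
    intro y w
    have h1 : (y⁺ + w⁺) - (y⁻ + w⁻) = y + w := by
      calc (y⁺ + w⁺) - (y⁻ + w⁻) = (y⁺ - y⁻) + (w⁺ - w⁻) := by abel
        _ = y + w := by rw [posPart_sub_negPart, posPart_sub_negPart]
    have h2 : pp (y + w)
        = pf (y⁺ + w⁺) (add_nonneg (posPart_nonneg y) (posPart_nonneg w))
          - pf (y⁻ + w⁻) (add_nonneg (negPart_nonneg y) (negPart_nonneg w)) := by
      rw [← h1]
      exact hrep _ _ _ _
    rw [h2, hadd y⁺ (posPart_nonneg y) w⁺ (posPart_nonneg w),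
      hadd y⁻ (negPart_nonneg y) w⁻ (negPart_nonneg w)]
    show _ = (pf y⁺ (posPart_nonneg y) - pf y⁻ (negPart_nonneg y))
      + (pf w⁺ (posPart_nonneg w) - pf w⁻ (negPart_nonneg w))
    abel
  have hppbound : ∀ y : L, ‖pp y‖ ≤ 2 * ‖y‖ := by
    intro y
    have hposle : y⁺ ≤ |y| := by
      rw [← posPart_add_negPart y]
      exact le_add_of_nonneg_right (negPart_nonneg y)
    have hnegle : y⁻ ≤ |y| := by
      rw [← posPart_add_negPart y]
      exact le_add_of_nonneg_left (posPart_nonneg y)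
    have h1 : ‖pf y⁺ (posPart_nonneg y)‖ ≤ ‖y‖ := by
      refine (snorm8 (hnng y⁺ (posPart_nonneg y)) (hley y⁺ (posPart_nonneg y))).trans ?_
      calc ‖y⁺‖ ≤ ‖|y|‖ := snorm8 (posPart_nonneg y) hposle
        _ = ‖y‖ := norm_abs_eq_norm y
    have h2 : ‖pf y⁻ (negPart_nonneg y)‖ ≤ ‖y‖ := by
      refine (snorm8 (hnng y⁻ (negPart_nonneg y)) (hley y⁻ (negPart_nonneg y))).trans ?_
      calc ‖y⁻‖ ≤ ‖|y|‖ := snorm8 (negPart_nonneg y) hnegle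
        _ = ‖y‖ := norm_abs_eq_norm y
    calc ‖pp y‖ ≤ ‖pf y⁺ (posPart_nonneg y)‖ + ‖pf y⁻ (negPart_nonneg y)‖ :=
        norm_sub_le _ _
      _ ≤ ‖y‖ + ‖y‖ := add_le_add h1 h2
      _ = 2 * ‖y‖ := by ring
  set Pm : L →+ L := AddMonoidHom.mk' pp hppadd with hPm
  have hPmcont : Continuous Pm :=
    (AddMonoidHomClass.lipschitz_of_bound Pm 2 hppbound).continuous
  set P : L →L[ℝ] L := Pm.toRealLinearMap hPmcont with hPdef
  have hPapp : ∀ y : L, P y = pp y := fun y => rfl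
  set Q : L →L[ℝ] L := ContinuousLinearMap.id ℝ L - P with hQdef
  have hQapp : ∀ y : L, Q y = y - pp y := by
    intro y
    rw [hQdef, ContinuousLinearMap.sub_apply, ContinuousLinearMap.id_apply, hPapp]
  set R : L →L[ℝ] L := (P.comp T).comp Q with hRdef
  have hRapp : ∀ y : L, R y = pp (T (y - pp y)) := by
    intro y
    rw [hRdef, ContinuousLinearMap.comp_apply, ContinuousLinearMap.comp_apply,
      hQapp, hPapp]
  have hmain : ∀ y : L, 0 ≤ y → R (T y) = 0 := by
    intro y hy
    have hz : 0 ≤ T y := hT.1 y hy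
    set u := pf (T y) hz with hu
    have huJ : u ∈ J := hmemJ _ hz
    set v := T y - u with hv
    have hv0 : 0 ≤ v := sub_nonneg.mpr (hley _ hz)
    have hvd : ∀ j' ∈ J, 0 ≤ j' → v ⊓ j' = 0 := hdisj _ hz
    have hTv0 : 0 ≤ T v := hT.1 v hv0
    set b := pf (T v) hTv0 with hb
    have hbJ : b ∈ J := hmemJ _ hTv0
    have hb0 : 0 ≤ b := hnng _ hTv0
    set c := T v - b with hc
    have hc0 : 0 ≤ c := sub_nonneg.mpr (hley _ hTv0)
    have hcd : ∀ j' ∈ J, 0 ≤ j' → c ⊓ j' = 0 := hdisj _ hTv0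
    have heq : u + v = T u + (b + c) := by
      have h1 : u + v = T y := by rw [hv]; abel
      have h2 : b + c = T v := by rw [hc]; abel
      rw [h1, h2, ← map_add, h1, hTT]
    set e := u - (T u + b) with he
    have heJ : e ∈ J := J.sub_mem huJ (J.add_mem (hinv u huJ) hbJ)
    have heabsJ : |e| ∈ J := habsJ e heJ
    have hee : e = c - v := by
      rw [he, sub_eq_sub_iff_add_eq_add, heq]; abel
    have habs0 : |e| = 0 := by
      have h1 : |e| ≤ c + v := by
        rw [hee, sub_eq_add_neg]
        calc |c + -v| ≤ |c| + |-v| := abs_add_le c (-v)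
          _ = c + v := by rw [abs_neg, abs_of_nonneg hc0, abs_of_nonneg hv0]
      have h2 : (c + v) ⊓ |e| ≤ c ⊓ |e| + v ⊓ |e| := inf_add_le8 hc0 hv0 (abs_nonneg e)
      have h3 : c ⊓ |e| = 0 := hcd |e| heabsJ (abs_nonneg e)
      have h4 : v ⊓ |e| = 0 := hvd |e| heabsJ (abs_nonneg e)
      have h5 : |e| ≤ (c + v) ⊓ |e| := le_inf h1 le_rfl
      rw [h3, h4, add_zero] at h2
      exact le_antisymm (h5.trans h2) (abs_nonneg e)
    have he0 : e = 0 := by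
      have hp : e ≤ 0 := by
        have := le_abs_self e
        rwa [habs0] at this
      have hn : 0 ≤ e := by
        have := neg_le_abs e
        rw [habs0] at this
        exact neg_nonpos.mp this
      exact le_antisymm hp hn
    have hub : u = T u + b := by
      rw [he] at he0
      exact sub_eq_zero.mp he0
    have hTb : T b = 0 := by
      have h1 := congrArg T hub
      rw [map_add, hTT u] at h1
      exact (left_eq_add.mp h1)
    have hbz : b = 0 := by
      refine hT.2 b ?_
      rw [abs_of_nonneg hb0]
      exact hTb
    rw [hRapp, hpp_pos (T y) hz, ← hu, ← hv, hpp_pos (T v) hTv0, ← hb, hbz]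
  have hR0 : ∀ y : L, R (T y) = 0 := by
    intro y
    rw [← posPart_sub_negPart y, map_sub, map_sub,
      hmain y⁺ (posPart_nonneg y), hmain y⁻ (negPart_nonneg y), sub_zero]
  have hker : ∀ φ : L →L[ℝ] ℝ, (∀ w : L, 0 ≤ w → 0 ≤ φ w) → ∀ y : L, φ (R y) = 0 := by
    intro φ hφ y
    have hψpos : ∀ w : L, 0 ≤ w → 0 ≤ (φ.comp R) w := by
      intro w hw
      rw [ContinuousLinearMap.comp_apply]
      refine hφ _ ?_
      have h1 : 0 ≤ w - pp w := by
        rw [hpp_pos w hw]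
        exact sub_nonneg.mpr (hley w hw)
      have h2 : 0 ≤ T (w - pp w) := hT.1 _ h1
      rw [hRapp, hpp_pos _ h2]
      exact hnng _ h2
    have hψT : (φ.comp R).comp T = 0 := by
      ext y'
      simp only [ContinuousLinearMap.comp_apply, ContinuousLinearMap.zero_apply]
      rw [hR0 y', map_zero]
    have h0 := hT' (φ.comp R) hψpos hψT
    have h1 := ContinuousLinearMap.ext_iff.mp h0 y
    simpa [ContinuousLinearMap.comp_apply] using h1
  intro x hx j hjJ
  have ha0 : 0 ≤ |x| := abs_nonneg x
  have hpa : pf |x| ha0 = 0 := by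
    refine hzero |x| ha0 ?_
    intro j' hj' hj0
    have := hx j' hj'
    rwa [abs_of_nonneg hj0] at this
  have hTa0 : 0 ≤ T |x| := hT.1 _ ha0
  have hRx : R |x| = pf (T |x|) hTa0 := by
    rw [hRapp, hpp_pos |x| ha0, hpa, sub_zero, hpp_pos _ hTa0]
  have hw0 : pf (T |x|) hTa0 = 0 := by
    by_contra hne
    obtain ⟨φ, hφpos, hφu⟩ := exists_pos_functional8 _ (hnng _ hTa0) hne
    have h1 := hker φ hφpos |x|
    rw [hRx] at h1
    rw [h1] at hφu
    exact lt_irrefl 0 hφu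
  have hTad : ∀ j' ∈ J, 0 ≤ j' → T |x| ⊓ j' = 0 := by
    intro j' h1 h2
    have h3 := hdisj (T |x|) hTa0 j' h1 h2
    rwa [hw0, sub_zero] at h3
  have habsj : |j| ∈ J := habsJ j hjJ
  have h1 : T |x| ⊓ |j| = 0 := hTad |j| habsj (abs_nonneg j)
  have h2 : |T x| ≤ T |x| := by
    have ha : T x ≤ T |x| := hTmono (le_abs_self x)
    have hb2 : -(T x) ≤ T |x| := by
      rw [← map_neg]
      exact hTmono (neg_le_abs x)
    exact abs_le'.mpr ⟨ha, hb2⟩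
  have h3 : |T x| ⊓ |j| ≤ 0 := by
    rw [← h1]
    exact inf_le_inf_right |j| h2
  exact le_antisymm h3 (le_inf (abs_nonneg _) (abs_nonneg _))
end

section
/- Let S be a multiplicative semigroup of nonnegative n×n real matrices such that each S ∈ S is permutation-similar to an upper triangular matrix, and such that the diagonal of ST equals the diagonal of TS for all S, T ∈ S. Then there is a single permutation matrix P such that every matrix in P S P⁻¹ is upper triangular. -/
theorem stmt17 (n : ℕ) (𝒮 : Set (Matrix (Fin n) (Fin n) ℝ))
    (hnn : ∀ M ∈ 𝒮, ∀ i j, 0 ≤ M i j)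
    (hmul : ∀ S ∈ 𝒮, ∀ T ∈ 𝒮, S * T ∈ 𝒮)
    (htri : ∀ M ∈ 𝒮, ∃ σ : Equiv.Perm (Fin n),
      ∀ i j : Fin n, j < i → (M.submatrix σ σ) i j = 0)
    (hdiag : ∀ S ∈ 𝒮, ∀ T ∈ 𝒮, ∀ i : Fin n, (S * T) i i = (T * S) i i) :
    ∃ σ : Equiv.Perm (Fin n), ∀ M ∈ 𝒮,
      ∀ i j : Fin n, j < i → (M.submatrix σ σ) i j = 0 := by
  classical
  -- Antisymmetry: no two matrices can realize a 2-cycle between distinct indices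
  have antisym : ∀ A ∈ 𝒮, ∀ B ∈ 𝒮, ∀ i j : Fin n,
      0 < A i j → 0 < B j i → i = j := by
    intro A hA B hB i j hAij hBji
    by_contra hne
    -- step: from a "pattern" at (u,v) produce a new pattern at (w,u)
    have step : ∀ u v : Fin n, u ≠ v → 0 < A u v → 0 < B v u →
        ∃ w : Fin n, w ≠ u ∧ 0 < A w u ∧ 0 < B u w := by
      intro u v huv hAuv hBvu
      by_contra hno
      push_neg at hno
      have hzero : ∀ w : Fin n, w ≠ u → B u w * A w u = 0 := by
        intro w hw
        rcases (hnn A hA w u).lt_or_eq with h1 | h1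
        · have h3 : B u w = 0 :=
            le_antisymm (hno w hw h1) (hnn B hB u w)
          rw [h3, zero_mul]
        · rw [← h1, mul_zero]
      have hBA : (B * A) u u = B u u * A u u := by
        rw [Matrix.mul_apply]
        exact Finset.sum_eq_single u (fun b _ hb => hzero b hb)
          (fun h => absurd (Finset.mem_univ u) h)
      have hAB : A u u * B u u + A u v * B v u ≤ (A * B) u u := by
        rw [Matrix.mul_apply]
        calc A u u * B u u + A u v * B v u
            = ∑ k ∈ ({u, v} : Finset (Fin n)), A u k * B k u := by
              rw [Finset.sum_pair huv]
          _ ≤ ∑ k, A u k * B k u :=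
              Finset.sum_le_sum_of_subset_of_nonneg (Finset.subset_univ _)
                (fun k _ _ => mul_nonneg (hnn A hA u k) (hnn B hB k u))
      have hd := hdiag A hA B hB u
      have hposc : 0 < A u v * B v u := mul_pos hAuv hBvu
      nlinarith [hAB, hBA, hd]
    obtain ⟨σA, hσA⟩ := htri A hA
    have key : ∀ x y : Fin n, 0 < A x y → σA.symm x ≤ σA.symm y := by
      intro x y hxy
      by_contra h
      push_neg at h
      have h0 := hσA _ _ h
      simp only [Matrix.submatrix_apply, Equiv.apply_symm_apply] at h0
      rw [h0] at hxy
      exact lt_irrefl 0 hxy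
    -- build the infinite chain
    let T := {p : Fin n × Fin n // p.1 ≠ p.2 ∧ 0 < A p.1 p.2 ∧ 0 < B p.2 p.1}
    let next : T → T := fun q =>
      ⟨((step q.1.1 q.1.2 q.2.1 q.2.2.1 q.2.2.2).choose, q.1.1),
        (step q.1.1 q.1.2 q.2.1 q.2.2.1 q.2.2.2).choose_spec.1,
        (step q.1.1 q.1.2 q.2.1 q.2.2.1 q.2.2.2).choose_spec.2.1,
        (step q.1.1 q.1.2 q.2.1 q.2.2.1 q.2.2.2).choose_spec.2.2⟩
    let s : ℕ → T := fun t => next^[t] ⟨(i, j), hne, hAij, hBji⟩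
    have hlink : ∀ t : ℕ, (s (t + 1)).1.2 = (s t).1.1 := by
      intro t
      show (next^[t + 1] _).1.2 = _
      rw [Function.iterate_succ_apply']
    let ord : ℕ → ℕ := fun t => (σA.symm ((s t).1.2) : ℕ)
    have hdec : ∀ t : ℕ, ord (t + 1) < ord t := by
      intro t
      have h1 : σA.symm ((s t).1.1) ≤ σA.symm ((s t).1.2) :=
        key _ _ (s t).2.2.1
      have h2 : σA.symm ((s t).1.1) ≠ σA.symm ((s t).1.2) := by
        intro h
        exact (s t).2.1 (σA.symm.injective h)
      have h3 : σA.symm ((s t).1.1) < σA.symm ((s t).1.2) :=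
        lt_of_le_of_ne h1 h2
      show (σA.symm ((s (t + 1)).1.2) : ℕ) < (σA.symm ((s t).1.2) : ℕ)
      rw [hlink t]
      exact h3
    have hle : ∀ t : ℕ, ord t + t ≤ ord 0 := by
      intro t
      induction t with
      | zero => simp
      | succ k ih =>
        have := hdec k
        omega
    have := hle (ord 0 + 1)
    omega
  -- the reachability relation
  let rel : Fin n → Fin n → Prop :=
    fun x y => x = y ∨ ∃ M, M ∈ 𝒮 ∧ 0 < M x y
  have htrans : ∀ x y z : Fin n, rel x y → rel y z → rel x z := by
    intro x y z hxy hyz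
    rcases hxy with rfl | ⟨M, hM, hMxy⟩
    · exact hyz
    rcases hyz with rfl | ⟨N, hN, hNyz⟩
    · exact Or.inr ⟨M, hM, hMxy⟩
    refine Or.inr ⟨M * N, hmul M hM N hN, ?_⟩
    rw [Matrix.mul_apply]
    exact Finset.sum_pos'
      (fun k _ => mul_nonneg (hnn M hM x k) (hnn N hN k z))
      ⟨y, Finset.mem_univ y, mul_pos hMxy hNyz⟩
  let f : Fin n → ℕ := fun x => (Finset.univ.filter (fun z => rel z x)).card
  have hf : ∀ x y : Fin n, x ≠ y → (∃ M, M ∈ 𝒮 ∧ 0 < M x y) → f x < f y := by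
    intro x y hxy hrel
    apply Finset.card_lt_card
    constructor
    · intro z hz
      simp only [Finset.mem_filter, Finset.mem_univ, true_and] at hz ⊢
      exact htrans z x y hz (Or.inr hrel)
    · intro hsub
      have hy : y ∈ Finset.univ.filter (fun z => rel z y) := by
        simp only [Finset.mem_filter, Finset.mem_univ, true_and]
        exact Or.inl rfl
      have hy' := hsub hy
      simp only [Finset.mem_filter, Finset.mem_univ, true_and] at hy'
      rcases hy' with h | ⟨N, hN, hNyx⟩
      · exact hxy h.symm
      · obtain ⟨M, hM, hMxy⟩ := hrel
        exact hxy (antisym M hM N hN x y hMxy hNyx)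
  let g : Fin n → ℕ := fun x => (n + 1) * f x + (x : ℕ)
  have hg : ∀ x y : Fin n, x ≠ y → (∃ M, M ∈ 𝒮 ∧ 0 < M x y) → g x < g y := by
    intro x y hxy hrel
    have h1 : f x < f y := hf x y hxy hrel
    have h2 : (x : ℕ) < n + 1 := lt_of_lt_of_le x.isLt (Nat.le_succ n)
    calc g x = (n + 1) * f x + (x : ℕ) := rfl
      _ < (n + 1) * f x + (n + 1) := Nat.add_lt_add_left h2 _
      _ = (n + 1) * (f x + 1) := by ring
      _ ≤ (n + 1) * f y := Nat.mul_le_mul_left _ h1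
      _ ≤ (n + 1) * f y + (y : ℕ) := Nat.le_add_right _ _
  refine ⟨Tuple.sort g, ?_⟩
  intro M hM i j hji
  by_contra h0
  have hpos : 0 < M (Tuple.sort g i) (Tuple.sort g j) := by
    have := hnn M hM (Tuple.sort g i) (Tuple.sort g j)
    simp only [Matrix.submatrix_apply] at h0
    exact lt_of_le_of_ne this (Ne.symm h0)
  have hne : Tuple.sort g i ≠ Tuple.sort g j := by
    intro h
    have : i = j := (Tuple.sort g).injective h
    omega
  have h1 : g (Tuple.sort g i) < g (Tuple.sort g j) :=
    hg _ _ hne ⟨M, hM, hpos⟩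
  have h2 : g (Tuple.sort g j) ≤ g (Tuple.sort g i) :=
    Tuple.monotone_sort g (le_of_lt hji)
  omega
end

section
/- For n ≥ 3, let A_i = e_i e_{i+1}^T for i = 1,…,n−1 and A_n = e_n e_1^T be nonnegative n×n matrices, where e_1,…,e_n is the standard basis of ℝ^n. Then A_i A_j has zero diagonal for all i, j, each A_i is nilpotent (hence triangularizable by a permutation), but the family {A_1,…,A_n} is not simultaneously permutation-triangularizable; indeed S = A_1 + ⋯ + A_n satisfies S^n = I, so S is not nilpotent despite having zero diagonal. -/
private lemma succ_ne_self' {n i : ℕ} (hn : 3 ≤ n) (hi : i < n) : (i + 1) % n ≠ i := by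
  rcases Nat.lt_or_ge (i + 1) n with h | h
  · rw [Nat.mod_eq_of_lt h]; omega
  · have : i + 1 = n := by omega
    rw [this, Nat.mod_self]; omega

private lemma succ_succ_ne_self' {n i : ℕ} (hn : 3 ≤ n) (hi : i < n) :
    ((i + 1) % n + 1) % n ≠ i := by
  rcases Nat.lt_or_ge (i + 1) n with h | h
  · rw [Nat.mod_eq_of_lt h]
    rcases Nat.lt_or_ge (i + 2) n with h2 | h2
    · rw [Nat.mod_eq_of_lt h2]; omega
    · have : i + 2 = n := by omega
      rw [this, Nat.mod_self]; omega
  · have : i + 1 = n := by omega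
    rw [this, Nat.mod_self]
    rw [Nat.mod_eq_of_lt (by omega)]; omega

theorem stmt18 (n : ℕ) (hn : 3 ≤ n)
    (A : Fin n → Matrix (Fin n) (Fin n) ℝ)
    (hA : ∀ i : Fin n,
      A i = Matrix.single i ⟨((i : ℕ) + 1) % n, Nat.mod_lt _ (by omega)⟩ (1 : ℝ)) :
    (∀ i j k : Fin n, (A i * A j) k k = 0) ∧
    (∀ i : Fin n, (A i) ^ 2 = 0) ∧
    (∀ i : Fin n, ∃ σ : Equiv.Perm (Fin n),
      ∀ p q : Fin n, q < p → ((A i).submatrix σ σ) p q = 0) ∧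
    (¬ ∃ σ : Equiv.Perm (Fin n), ∀ i : Fin n,
      ∀ p q : Fin n, q < p → ((A i).submatrix σ σ) p q = 0) ∧
    (∑ i : Fin n, A i) ^ n = 1 := by
  haveI : NeZero n := ⟨by omega⟩
  have hval1 : ((1 : Fin n) : ℕ) = 1 := by
    simp [Fin.val_one', Nat.mod_eq_of_lt (show 1 < n by omega)]
  set s : Fin n → Fin n := fun i => ⟨((i : ℕ) + 1) % n, Nat.mod_lt _ (by omega)⟩ with hs
  have hsne : ∀ i : Fin n, s i ≠ i := by
    intro i h
    exact succ_ne_self' hn i.isLt (congrArg Fin.val h)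
  have hAeq : ∀ i : Fin n, A i = Matrix.single i (s i) (1 : ℝ) := hA
  refine ⟨?_, ?_, ?_, ?_, ?_⟩
  · -- zero diagonal of products
    intro i j k
    rw [hAeq i, hAeq j]
    by_cases hij : s i = j
    · rw [show s i = j from hij, Matrix.single_mul_single_same]
      apply Matrix.single_apply_of_ne
      rintro ⟨h1, h2⟩
      apply succ_succ_ne_self' hn i.isLt
      have hji : (j : ℕ) = ((i : ℕ) + 1) % n := (congrArg Fin.val hij).symm
      have h2v : ((j : ℕ) + 1) % n = (k : ℕ) := congrArg Fin.val h2
      rw [← hji, h2v]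
      exact (congrArg Fin.val h1).symm
    · rw [Matrix.single_mul_single_of_ne (h := hij)]
      rfl
  · -- squares are zero
    intro i
    rw [pow_two, hAeq i]
    rw [Matrix.single_mul_single_of_ne (h := hsne i)]
  · -- each A i triangularizable
    intro i
    have h01 : (0 : Fin n) ≠ 1 := by
      intro h; have := congrArg Fin.val h
      rw [hval1] at this; simp at this
    set τ : Equiv.Perm (Fin n) := Equiv.swap 0 i with hτ
    set c : Fin n := τ (s i) with hc
    have hc0 : c ≠ 0 := by
      intro h
      have h2 := congrArg τ h
      simp only [hc, hτ, Equiv.swap_apply_self, Equiv.swap_apply_left] at h2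
      exact hsne i h2
    set ρ : Equiv.Perm (Fin n) := Equiv.swap 1 c with hρ
    refine ⟨ρ.trans τ, ?_⟩
    have hσ0 : (ρ.trans τ) 0 = i := by
      simp only [Equiv.trans_apply, hρ, hτ]
      rw [Equiv.swap_apply_of_ne_of_ne h01 hc0.symm, Equiv.swap_apply_left]
    have hσ1 : (ρ.trans τ) 1 = s i := by
      simp only [Equiv.trans_apply, hρ]
      rw [Equiv.swap_apply_left, hc, Equiv.swap_apply_self]
    intro p q hpq
    rw [hAeq i]
    simp only [Matrix.submatrix_apply]
    apply Matrix.single_apply_of_ne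
    rintro ⟨h1, h2⟩
    have hp : p = 0 := (ρ.trans τ).injective (by rw [hσ0, h1])
    have hq : q = 1 := (ρ.trans τ).injective (by rw [hσ1, h2])
    rw [hp, hq] at hpq
    rw [Fin.lt_def, hval1] at hpq
    simp at hpq
  · -- not simultaneously triangularizable
    rintro ⟨σ, h⟩
    have key : ∀ i : Fin n, σ.symm i < σ.symm (s i) := by
      intro i
      rcases lt_trichotomy (σ.symm i) (σ.symm (s i)) with hlt | heq | hgt
      · exact hlt
      · exact absurd (σ.symm.injective heq) (fun hh => hsne i hh.symm)
      · exfalso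
        have := h i (σ.symm i) (σ.symm (s i)) hgt
        rw [hAeq i] at this
        simp only [Matrix.submatrix_apply, Equiv.apply_symm_apply] at this
        rw [Matrix.single_apply_same] at this
        exact one_ne_zero this
    set f : ℕ → ℕ := fun k => ((σ.symm ⟨k % n, Nat.mod_lt _ (by omega)⟩ : Fin n) : ℕ) with hf
    have hstep : ∀ m : ℕ, f m < f (m + 1) := by
      intro m
      have : (⟨(m + 1) % n, Nat.mod_lt _ (by omega)⟩ : Fin n)
          = s ⟨m % n, Nat.mod_lt _ (by omega)⟩ := by
        apply Fin.ext
        show (m + 1) % n = (m % n + 1) % n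
        conv_lhs => rw [Nat.add_mod, Nat.mod_eq_of_lt (show 1 < n by omega)]
      have hk := key ⟨m % n, Nat.mod_lt _ (by omega)⟩
      rw [← this] at hk
      exact Fin.lt_def.mp hk
    have hmono : ∀ m : ℕ, f 0 + m ≤ f m := by
      intro m
      induction m with
      | zero => omega
      | succ k ih => have := hstep k; omega
    have h1 : f n = f 0 := by
      simp only [hf, Nat.mod_self, Nat.zero_mod]
    have h2 : f n < n := (σ.symm _).isLt
    have := hmono n
    omega
  · -- S ^ n = 1
    set σ : Equiv.Perm (Fin n) := Equiv.addRight (1 : Fin n) with hσ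
    have hS : (∑ i : Fin n, A i) = (σ.toPEquiv.toMatrix : Matrix (Fin n) (Fin n) ℝ) := by
      ext a b
      rw [Matrix.sum_apply]
      rw [Finset.sum_eq_single a]
      · have hsa : s a = a + 1 := by
          apply Fin.ext
          show ((a : ℕ) + 1) % n = ((a : ℕ) + ((1 : Fin n) : ℕ)) % n
          rw [hval1]
        have hσa : σ a = a + 1 := rfl
        rw [hAeq a, PEquiv.toMatrix_apply, Equiv.toPEquiv_apply, hσa]
        by_cases hb : b = a + 1
        · rw [hb, if_pos (Option.mem_def.mpr rfl), ← hsa,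
            Matrix.single_apply_same]
        · rw [if_neg (fun h => hb (Option.some_injective _ (Option.mem_def.mp h)).symm)]
          exact Matrix.single_apply_of_ne _ _ _ _ _
            (by rintro ⟨-, h2⟩; exact hb (by rw [← h2, hsa]))
      · intro i _ hi
        rw [hAeq i]
        exact Matrix.single_apply_of_ne _ _ _ _ _ (fun h => hi h.1)
      · intro ha; exact absurd (Finset.mem_univ a) ha
    rw [hS]
    have hone : (((1 : Equiv.Perm (Fin n)).toPEquiv.toMatrix : Matrix (Fin n) (Fin n) ℝ)) = 1 := by
      rw [show (1 : Equiv.Perm (Fin n)) = Equiv.refl (Fin n) from rfl,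
        Equiv.toPEquiv_refl, PEquiv.toMatrix_refl]
    have hpow : ∀ k : ℕ, (σ.toPEquiv.toMatrix : Matrix (Fin n) (Fin n) ℝ) ^ k
        = ((σ ^ k).toPEquiv.toMatrix : Matrix (Fin n) (Fin n) ℝ) := by
      intro k
      induction k with
      | zero => rw [pow_zero, pow_zero, hone]
      | succ k ih =>
        rw [pow_succ, ih, ← PEquiv.toMatrix_trans, ← Equiv.toPEquiv_trans, pow_succ']
        rfl
    have hpa : ∀ (a : Fin n) (k : ℕ), Equiv.addRight a ^ k = Equiv.addRight (k • a) := by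
      intro a k
      induction k with
      | zero => exact Equiv.ext fun x => by simp
      | succ k ih =>
        rw [pow_succ, ih]
        exact Equiv.ext fun x => by
          simp only [Equiv.Perm.mul_apply, Equiv.coe_addRight, succ_nsmul]; abel
    rw [hpow n, hσ, hpa]
    have : (n • (1 : Fin n)) = 0 := by
      open Fin.CommRing in rw [nsmul_eq_mul, mul_one, Fin.natCast_self]
    rw [this, Equiv.addRight_zero, hone]
end
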